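/- Let ρ and σ be positive semidefinite d×d complex matrices and let E be a completely positive trace-nonincreasing (CPTNI) map from d×d to d'×d' complex matrices. Then ‖ρ − σ‖₁ ≥ ‖E(ρ) − E(σ)‖₁. -/

import Mathlib

open scoped BigOperators ComplexOrder Matrix

/-- The trace norm `‖A‖₁ = Tr √(AᴴA)` of a square complex matrix. -/
noncomputable def traceNorm {d : ℕ} (A : Matrix (Fin d) (Fin d) ℂ) : ℝ :=
  (((Matrix.posSemidef_conjTranspose_mul_self A).1.eigenvectorUnitary : Matrix (Fin d) (Fin d) ℂ) *
    Matrix.diagonal (((↑) : ℝ → ℂ) ∘ Real.sqrt ∘ (Matrix.posSemidef_conjTranspose_mul_self A).1.eigenvalues) *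
    (star (Matrix.posSemidef_conjTranspose_mul_self A).1.eigenvectorUnitary : Matrix (Fin d) (Fin d) ℂ)).trace.re

section AuxDPI
open Matrix
open scoped MatrixOrder

lemma trace_re_nonneg {n : ℕ} {M : Matrix (Fin n) (Fin n) ℂ} (hM : M.PosSemidef) :
    0 ≤ M.trace.re := by
  have h : ∀ i, 0 ≤ (M i i).re := by
    intro i
    have := hM.diag_nonneg (i := i)
    rw [Complex.le_def] at this
    simpa [dotProduct, Matrix.mulVec, Pi.single_apply] using this.1
  simpa [Matrix.trace, Matrix.diag, Complex.re_sum] using Finset.sum_nonneg fun i _ => h i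

lemma mul_trace_re_nonneg {n : ℕ} {X Y : Matrix (Fin n) (Fin n) ℂ}
    (hX : X.PosSemidef) (hY : Y.PosSemidef) : 0 ≤ (X * Y).trace.re := by
  have hs : (CFC.sqrt X) * (CFC.sqrt X) = X := CFC.sqrt_mul_sqrt_self X (Matrix.nonneg_iff_posSemidef.mpr hX)
  have h1 : (X * Y).trace = ((CFC.sqrt X) * Y * (CFC.sqrt X)).trace :=
    calc (X * Y).trace = ((CFC.sqrt X) * (CFC.sqrt X) * Y).trace := by rw [hs]
      _ = ((CFC.sqrt X) * Y * (CFC.sqrt X)).trace := (Matrix.trace_mul_cycle (CFC.sqrt X) Y (CFC.sqrt X)).symm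
  have h2 : ((CFC.sqrt X) * Y * (CFC.sqrt X)).PosSemidef := by
    have := hY.conjTranspose_mul_mul_same (CFC.sqrt X)
    rwa [(Matrix.nonneg_iff_posSemidef.mp (CFC.sqrt_nonneg X)).1.eq] at this
  rw [h1]; exact trace_re_nonneg h2

lemma psd_sum {n N : ℕ} (f : Fin N → Matrix (Fin n) (Fin n) ℂ)
    (hf : ∀ i, (f i).PosSemidef) : (∑ i, f i).PosSemidef := by
  classical
  induction (Finset.univ : Finset (Fin N)) using Finset.induction with
  | empty => simpa using Matrix.PosSemidef.zero
  | insert _ _ h ih => rw [Finset.sum_insert h]; exact (hf _).add ih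

noncomputable def fmat {n : ℕ} (V : Matrix (Fin n) (Fin n) ℂ) (e : Fin n → ℝ)
    (f : ℝ → ℝ) : Matrix (Fin n) (Fin n) ℂ :=
  V * Matrix.diagonal (fun i => ((f (e i) : ℝ) : ℂ)) * Vᴴ

variable {n : ℕ} {V : Matrix (Fin n) (Fin n) ℂ} {e : Fin n → ℝ}

lemma fmat_mul (hsV : Vᴴ * V = 1) (f g : ℝ → ℝ) :
    fmat V e f * fmat V e g = fmat V e (fun x => f x * g x) := by
  unfold fmat
  simp only [← Matrix.mul_assoc]
  rw [Matrix.mul_assoc _ Vᴴ V, hsV, Matrix.mul_one, Matrix.mul_assoc V,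
    Matrix.diagonal_mul_diagonal]
  simp [Complex.ofReal_mul]

lemma fmat_psd (f : ℝ → ℝ) (hf : ∀ x, 0 ≤ f x) : (fmat V e f).PosSemidef :=
  (Matrix.posSemidef_diagonal_iff.mpr fun i =>
    Complex.zero_le_real.mpr (hf _)).mul_mul_conjTranspose_same V

lemma fmat_sub (f g : ℝ → ℝ) :
    fmat V e f - fmat V e g = fmat V e (fun x => f x - g x) := by
  unfold fmat
  simp only [← Matrix.sub_mul, ← Matrix.mul_sub, Matrix.diagonal_sub]
  norm_num

lemma fmat_add (f g : ℝ → ℝ) :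
    fmat V e f + fmat V e g = fmat V e (fun x => f x + g x) := by
  unfold fmat
  simp only [← Matrix.add_mul, ← Matrix.mul_add, Matrix.diagonal_add]
  norm_num

lemma fmat_one (hVs : V * Vᴴ = 1) : fmat V e (fun _ => 1) = 1 := by
  unfold fmat
  simp only [Complex.ofReal_one, Matrix.diagonal_one, Matrix.mul_one, hVs]

lemma fmat_congr {f g : ℝ → ℝ} (h : ∀ x, f x = g x) : fmat V e f = fmat V e g := by
  unfold fmat
  congr 1
  ext i j
  simp [h]

lemma jordan {n : ℕ} {A : Matrix (Fin n) (Fin n) ℂ} (hA : A.IsHermitian) :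
    ∃ P Q R : Matrix (Fin n) (Fin n) ℂ,
      P.PosSemidef ∧ Q.PosSemidef ∧ R.PosSemidef ∧ (1 - R).PosSemidef ∧
      A = P - Q ∧ R * A = P ∧ traceNorm A = P.trace.re + Q.trace.re := by
  have hVs : (hA.eigenvectorUnitary : Matrix (Fin n) (Fin n) ℂ) * (hA.eigenvectorUnitary : Matrix (Fin n) (Fin n) ℂ)ᴴ = 1 :=
    Matrix.mem_unitaryGroup_iff.mp hA.eigenvectorUnitary.2
  have hsV : (hA.eigenvectorUnitary : Matrix (Fin n) (Fin n) ℂ)ᴴ * (hA.eigenvectorUnitary : Matrix (Fin n) (Fin n) ℂ) = 1 :=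
    Matrix.mem_unitaryGroup_iff'.mp hA.eigenvectorUnitary.2
  set V : Matrix (Fin n) (Fin n) ℂ := (hA.eigenvectorUnitary : Matrix (Fin n) (Fin n) ℂ)
  set e : Fin n → ℝ := hA.eigenvalues
  have hA_eq : A = fmat V e id := by
    unfold fmat
    simpa [Function.comp_def, Matrix.star_eq_conjTranspose] using hA.spectral_theorem
  have hPpsd : (fmat V e (fun x => max x 0)).PosSemidef :=
    fmat_psd _ (fun x => le_max_right _ _)
  have hQpsd : (fmat V e (fun x => max (-x) 0)).PosSemidef :=
    fmat_psd _ (fun x => le_max_right _ _)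
  have hRpsd : (fmat V e (fun x => if 0 < x then 1 else 0)).PosSemidef :=
    fmat_psd _ (fun x => by by_cases h : 0 < x <;> simp [h])
  have hR1 : ((1 : Matrix (Fin n) (Fin n) ℂ) - fmat V e (fun x => if 0 < x then 1 else 0)).PosSemidef := by
    rw [← fmat_one hVs, fmat_sub]
    exact fmat_psd _ (fun x => by by_cases h : 0 < x <;> simp [h])
  have hsub : A = fmat V e (fun x => max x 0) - fmat V e (fun x => max (-x) 0) := by
    rw [fmat_sub]
    rw [hA_eq]
    apply fmat_congr
    intro x
    rcases le_total x 0 with h | h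
    · simp [max_eq_right h, max_eq_left (neg_nonneg.mpr h)]
    · simp [max_eq_left h, max_eq_right (neg_nonpos.mpr h)]
  have hRA : fmat V e (fun x => if 0 < x then 1 else 0) * A = fmat V e (fun x => max x 0) := by
    rw [hA_eq, fmat_mul hsV]
    apply fmat_congr
    intro x
    rcases lt_or_ge 0 x with h | h
    · simp [h, max_eq_left h.le]
    · simp [not_lt.mpr h, max_eq_right h]
  have habs : fmat V e (fun x => |x|) = fmat V e (fun x => max x 0) + fmat V e (fun x => max (-x) 0) := by
    rw [fmat_add]
    apply fmat_congr
    intro x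
    rcases le_total x 0 with h | h
    · simp [max_eq_right h, max_eq_left (neg_nonneg.mpr h), abs_of_nonpos h]
    · simp [max_eq_left h, max_eq_right (neg_nonpos.mpr h), abs_of_nonneg h]
  have hsq : (fmat V e (fun x => |x|)) ^ 2 = Aᴴ * A := by
    calc (fmat V e (fun x => |x|)) ^ 2
        = fmat V e (fun x => |x| * |x|) := by rw [pow_two, fmat_mul hsV]
      _ = fmat V e (fun x => x * x) := fmat_congr fun x => abs_mul_abs_self x
      _ = fmat V e id * fmat V e id := by
          rw [fmat_mul hsV]; rfl
      _ = A * A := by rw [← hA_eq]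
      _ = Aᴴ * A := by rw [hA.eq]
  have hsqrt : ((Matrix.posSemidef_conjTranspose_mul_self A).1.eigenvectorUnitary : Matrix (Fin n) (Fin n) ℂ) *
      Matrix.diagonal (((↑) : ℝ → ℂ) ∘ Real.sqrt ∘ (Matrix.posSemidef_conjTranspose_mul_self A).1.eigenvalues) *
      (star (Matrix.posSemidef_conjTranspose_mul_self A).1.eigenvectorUnitary : Matrix (Fin n) (Fin n) ℂ) =
      fmat V e (fun x => |x|) := by
    rw [← CFC.sqrt_unique (a := Aᴴ * A) (b := fmat V e (fun x => |x|)) (by rw [← pow_two]; exact hsq)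
        (Matrix.nonneg_iff_posSemidef.mpr (fmat_psd _ fun x => abs_nonneg x)),
      CFC.sqrt_eq_real_sqrt _ (Matrix.nonneg_iff_posSemidef.mpr (Matrix.posSemidef_conjTranspose_mul_self A)),
      cfcₙ_eq_cfc (hf0 := Real.sqrt_zero), Matrix.IsHermitian.cfc_eq (Matrix.posSemidef_conjTranspose_mul_self A).1]
    rfl
  refine ⟨_, _, _, hPpsd, hQpsd, hRpsd, hR1, hsub, hRA, ?_⟩
  rw [traceNorm, hsqrt, habs, Matrix.trace_add, Complex.add_re]

lemma step {d d' m : ℕ} (K : Fin m → Matrix (Fin d') (Fin d) ℂ)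
    (hK : ((1 : Matrix (Fin d) (Fin d) ℂ) - ∑ i, (K i)ᴴ * K i).PosSemidef)
    {P : Matrix (Fin d) (Fin d) ℂ} (hP : P.PosSemidef)
    {R : Matrix (Fin d') (Fin d') ℂ}
    (hR1 : ((1 : Matrix (Fin d') (Fin d') ℂ) - R).PosSemidef) :
    (R * ∑ i, K i * P * (K i)ᴴ).trace.re ≤ P.trace.re := by
  set EP := ∑ i, K i * P * (K i)ᴴ with hEPdef
  have hEP : EP.PosSemidef := psd_sum _ fun i => hP.mul_mul_conjTranspose_same (K i)
  have h1 : (R * EP).trace.re ≤ EP.trace.re := by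
    have h := mul_trace_re_nonneg hR1 hEP
    have he : ((1 - R) * EP).trace = EP.trace - (R * EP).trace := by
      rw [Matrix.sub_mul, Matrix.one_mul, Matrix.trace_sub]
    rw [he, Complex.sub_re] at h
    linarith
  have h2 : EP.trace = ((∑ i, (K i)ᴴ * K i) * P).trace := by
    rw [hEPdef, Matrix.trace_sum, Matrix.sum_mul, Matrix.trace_sum]
    exact Finset.sum_congr rfl fun i _ => Matrix.trace_mul_cycle (K i) P ((K i)ᴴ)
  have h3 : ((∑ i, (K i)ᴴ * K i) * P).trace.re ≤ P.trace.re := by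
    have h := mul_trace_re_nonneg hK hP
    rw [Matrix.sub_mul, Matrix.one_mul, Matrix.trace_sub, Complex.sub_re] at h
    linarith
  rw [h2] at h1
  linarith


end AuxDPI

/-- Data-processing for the trace norm under a completely positive
trace-nonincreasing map `E(X) = Σ K_i X K_iᴴ` (with `I − Σ K_iᴴ K_i ⪰ 0`):
for positive semidefinite `ρ, σ`, `‖ρ − σ‖₁ ≥ ‖E(ρ) − E(σ)‖₁`. -/
theorem traceNorm_cptni_contraction
    {d d' m : ℕ}
    (K : Fin m → Matrix (Fin d') (Fin d) ℂ)
    (hK : ((1 : Matrix (Fin d) (Fin d) ℂ) - ∑ i, (K i)ᴴ * K i).PosSemidef)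
    (E : Matrix (Fin d) (Fin d) ℂ → Matrix (Fin d') (Fin d') ℂ)
    (hE : E = fun X => ∑ i, K i * X * (K i)ᴴ)
    (ρ σ : Matrix (Fin d) (Fin d) ℂ)
    (hρ : ρ.PosSemidef) (hσ : σ.PosSemidef) :
    traceNorm (ρ - σ) ≥ traceNorm (E ρ - E σ) := by
  subst hE
  obtain ⟨P, Q, R, hP, hQ, hR, hR1, hPQ, hRA, htrA⟩ := jordan (hρ.1.sub hσ.1)
  have hd : ∀ X Y : Matrix (Fin d) (Fin d) ℂ,
      (∑ i, K i * X * (K i)ᴴ) - (∑ i, K i * Y * (K i)ᴴ) = ∑ i, K i * (X - Y) * (K i)ᴴ := by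
    intro X Y
    rw [← Finset.sum_sub_distrib]
    exact Finset.sum_congr rfl fun i _ => by rw [Matrix.mul_sub, Matrix.sub_mul]
  set EP := ∑ i, K i * P * (K i)ᴴ with hEPdef
  set EQ := ∑ i, K i * Q * (K i)ᴴ with hEQdef
  have hEPpsd : EP.PosSemidef := psd_sum _ fun i => hP.mul_mul_conjTranspose_same (K i)
  have hEQpsd : EQ.PosSemidef := psd_sum _ fun i => hQ.mul_mul_conjTranspose_same (K i)
  have hBsplit : (∑ i, K i * ρ * (K i)ᴴ) - (∑ i, K i * σ * (K i)ᴴ) = EP - EQ := by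
    rw [hd, hPQ, ← hd]
  have hBherm : ((∑ i, K i * ρ * (K i)ᴴ) - (∑ i, K i * σ * (K i)ᴴ)).IsHermitian := by
    rw [hBsplit]; exact hEPpsd.1.sub hEQpsd.1
  obtain ⟨P', Q', R', hP', hQ', hR', hR1', hPQ', hRA', htrB⟩ := jordan hBherm
  -- bound trace of P'
  have hP'bound : P'.trace.re ≤ P.trace.re := by
    have h1 : P' = R' * EP - R' * EQ := by
      rw [← Matrix.mul_sub, ← hBsplit, hRA']
    have h2 : 0 ≤ (R' * EQ).trace.re := mul_trace_re_nonneg hR' hEQpsd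
    have h3 : (R' * EP).trace.re ≤ P.trace.re := step K hK hP hR1'
    have h4 : P'.trace.re = (R' * EP).trace.re - (R' * EQ).trace.re := by
      rw [h1, Matrix.trace_sub, Complex.sub_re]
    linarith
  -- bound trace of Q'
  have hQ'bound : Q'.trace.re ≤ Q.trace.re := by
    have h1 : Q' = (1 - R') * EQ - (1 - R') * EP := by
      have h0 : Q' = P' - ((∑ i, K i * ρ * (K i)ᴴ) - (∑ i, K i * σ * (K i)ᴴ)) := by
        rw [hPQ']; exact (sub_sub_cancel _ _).symm
      rw [h0, ← hRA', hBsplit, Matrix.mul_sub, Matrix.sub_mul, Matrix.sub_mul,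
        Matrix.one_mul, Matrix.one_mul]
      abel
    have h2 : 0 ≤ ((1 - R') * EP).trace.re := mul_trace_re_nonneg hR1' hEPpsd
    have h3 : ((1 - R') * EQ).trace.re ≤ Q.trace.re := by
      refine step K hK hQ ?_
      rw [sub_sub_cancel]
      exact hR'
    have h4 : Q'.trace.re = ((1 - R') * EQ).trace.re - ((1 - R') * EP).trace.re := by
      rw [h1, Matrix.trace_sub, Complex.sub_re]
    linarith
  rw [ge_iff_le, htrA, htrB]
  linarith
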